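/- Let Γ be a connected graph such that every proper subset X of V(Γ) is a (1/2)-set, meaning there exists u ∈ V(Γ)\X with |N_Γ(u) ∩ X| ≥ |X|/2. Then the minimum number of forests needed to cover all edges of Γ equals ⌈|E(Γ)|/(|V(Γ)|−1)⌉. -/

import Mathlib

open SimpleGraph

variable {V : Type*}

namespace ForestCover

open Finset

open scoped Classical

/-- The graph on `V` determined by a finite set of (potential) edges. -/
noncomputable def eg (S : Finset (Sym2 V)) : SimpleGraph V := SimpleGraph.fromEdgeSet ↑S

/-- `S` is a forest-like edge set. -/
def IsForestF (S : Finset (Sym2 V)) : Prop := (eg S).IsAcyclic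

/-- No loops among the edges of `S`. -/
def Nice (S : Finset (Sym2 V)) : Prop := ∀ e ∈ S, ¬ e.IsDiag

lemma eg_adj {S : Finset (Sym2 V)} {a b : V} : (eg S).Adj a b ↔ s(a,b) ∈ S ∧ a ≠ b := by
  simp [eg]

lemma eg_mono {S T : Finset (Sym2 V)} (h : S ⊆ T) : eg S ≤ eg T :=
  SimpleGraph.fromEdgeSet_mono (by exact_mod_cast h)

lemma mem_of_mem_edgeSet {S : Finset (Sym2 V)} {e : Sym2 V} (h : e ∈ (eg S).edgeSet) : e ∈ S := by
  rw [eg, SimpleGraph.edgeSet_fromEdgeSet] at h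
  exact_mod_cast h.1

lemma not_isDiag_of_mem_edgeSet' {S : Finset (Sym2 V)} {e : Sym2 V} (h : e ∈ (eg S).edgeSet) :
    ¬ e.IsDiag := by
  rw [eg, SimpleGraph.edgeSet_fromEdgeSet] at h
  exact h.2

lemma mem_edgeSet_of_mem {S : Finset (Sym2 V)} {e} (h : e ∈ S) (hd : ¬ e.IsDiag) :
    e ∈ (eg S).edgeSet := by
  rw [eg, SimpleGraph.edgeSet_fromEdgeSet]
  exact ⟨by exact_mod_cast h, hd⟩

lemma walk_edges_mem {S : Finset (Sym2 V)} {u v : V} (p : (eg S).Walk u v) {e : Sym2 V}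
    (he : e ∈ p.edges) : e ∈ S :=
  mem_of_mem_edgeSet (p.edges_subset_edgeSet he)

/-- Transferring a cycle to a supergraph-with-the-same-edges keeps it a cycle. -/
lemma isCycle_transfer {G H : SimpleGraph V} {u : V} {p : G.Walk u u}
    (hc : p.IsCycle) (hp : ∀ e ∈ p.edges, e ∈ H.edgeSet) : (p.transfer H hp).IsCycle := by
  rw [Walk.isCycle_def, Walk.isTrail_def] at hc ⊢
  refine ⟨by rw [Walk.edges_transfer]; exact hc.1, ?_, by rw [Walk.support_transfer]; exact hc.2.2⟩
  intro h
  apply hc.2.1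
  rw [Walk.eq_nil_iff_nil, ← Walk.length_eq_zero_iff] at h ⊢
  rwa [Walk.length_transfer] at h

/-- Forests are closed under subsets. -/
lemma IsForestF.anti {S T : Finset (Sym2 V)} (h : T ⊆ S) (hS : IsForestF S) : IsForestF T := by
  intro v c hc
  have hed : ∀ e ∈ c.edges, e ∈ (eg S).edgeSet := by
    intro e he
    exact mem_edgeSet_of_mem (h (walk_edges_mem c he)) (not_isDiag_of_mem_edgeSet' (c.edges_subset_edgeSet he))
  exact hS (c.transfer (eg S) hed) (isCycle_transfer hc hed)

/-- Adding an edge between two vertices that are not connected keeps a forest a forest. -/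
lemma IsForestF.insertEdge {S : Finset (Sym2 V)} {a b : V} (hS : IsForestF S) (hab : a ≠ b)
    (hr : ¬ (eg S).Reachable a b) : IsForestF (insert s(a,b) S) := by
  classical
  intro v c hc
  by_cases he : s(a,b) ∈ c.edges
  · have hadj : (eg (insert s(a,b) S)).Adj a b := eg_adj.mpr ⟨Finset.mem_insert_self _ _, hab⟩
    have := SimpleGraph.adj_and_reachable_delete_edges_iff_exists_cycle.mpr ⟨v, c, hc, he⟩
    apply hr
    refine this.2.mono ?_
    intro x y hxy
    rw [SimpleGraph.deleteEdges_adj] at hxy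
    obtain ⟨h1, hn⟩ := hxy
    rw [eg_adj] at h1
    obtain ⟨hm, hne⟩ := h1
    rw [eg_adj]
    rcases Finset.mem_insert.mp hm with h | h
    · exact absurd (Set.mem_singleton_iff.mpr h) hn
    · exact ⟨h, hne⟩
  · have hed : ∀ e ∈ c.edges, e ∈ (eg S).edgeSet := by
      intro e hee
      have h1 := walk_edges_mem c hee
      have h2 := not_isDiag_of_mem_edgeSet' (c.edges_subset_edgeSet hee)
      rcases Finset.mem_insert.mp h1 with h | h
      · exact absurd (h ▸ hee) he
      · exact mem_edgeSet_of_mem h h2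
    exact hS (c.transfer (eg S) hed) (isCycle_transfer hc hed)

/-- In a forest, the two ends of an edge are not connected after deleting that edge. -/
lemma IsForestF.not_reachable_erase {S : Finset (Sym2 V)} {a b : V} (hS : IsForestF S)
    (he : s(a,b) ∈ S) (hab : a ≠ b) : ¬ (eg (S.erase s(a,b))).Reachable a b := by
  classical
  intro hr
  obtain ⟨w⟩ := hr
  obtain ⟨p0, hp0⟩ : ∃ p0 : (eg (S.erase s(a,b))).Walk a b, p0.IsPath :=
    ⟨w.toPath, w.toPath.isPath⟩
  have hed : ∀ e ∈ p0.edges, e ∈ (eg S).edgeSet := by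
    intro e hee
    exact mem_edgeSet_of_mem (Finset.mem_of_mem_erase (walk_edges_mem _ hee))
      (not_isDiag_of_mem_edgeSet' (p0.edges_subset_edgeSet hee))
  have hnot : s(a,b) ∉ (p0.transfer (eg S) hed).edges := by
    rw [Walk.edges_transfer]
    intro hmem
    exact Finset.notMem_erase _ _ (walk_edges_mem _ hmem)
  have hadj : (eg S).Adj a b := eg_adj.mpr ⟨he, hab⟩
  have hun := hS.path_unique (SimpleGraph.Path.singleton hadj)
    ⟨p0.transfer (eg S) hed, Walk.IsPath.transfer hed hp0⟩
  have hval : (SimpleGraph.Path.singleton hadj : (eg S).Walk a b) = p0.transfer (eg S) hed :=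
    congrArg Subtype.val hun
  apply hnot
  rw [← hval]
  exact SimpleGraph.Path.mk'_mem_edges_singleton hadj

/-- Reachability through an added edge decomposes. -/
lemma reach_insert_cases {S : Finset (Sym2 V)} {a b : V} {x y : V}
    (h : (eg (insert s(a,b) S)).Reachable x y) :
    (eg S).Reachable x y ∨ ((eg S).Reachable x a ∧ (eg S).Reachable b y) ∨
      ((eg S).Reachable x b ∧ (eg S).Reachable a y) := by
  classical
  obtain ⟨w⟩ := h
  induction w with
  | nil => exact Or.inl (SimpleGraph.Reachable.refl _)
  | @cons x c y h p ih =>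
    rcases eg_adj.mp h with ⟨hm, hne⟩
    rcases Finset.mem_insert.mp hm with hcase | hcase
    · rcases Sym2.eq_iff.mp hcase with ⟨rfl, rfl⟩ | ⟨rfl, rfl⟩
      · rcases ih with h1 | ⟨h1, h2⟩ | ⟨h1, h2⟩
        · exact Or.inr (Or.inl ⟨SimpleGraph.Reachable.refl _, h1⟩)
        · exact Or.inl (h1.symm.trans h2)
        · exact Or.inl h2
      · rcases ih with h1 | ⟨h1, h2⟩ | ⟨h1, h2⟩
        · exact Or.inr (Or.inr ⟨SimpleGraph.Reachable.refl _, h1⟩)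
        · exact Or.inl h2
        · exact Or.inl (h1.symm.trans h2)
    · have hadj : (eg S).Adj x c := eg_adj.mpr ⟨hcase, hne⟩
      rcases ih with h1 | ⟨h1, h2⟩ | ⟨h1, h2⟩
      · exact Or.inl (hadj.reachable.trans h1)
      · exact Or.inr (Or.inl ⟨hadj.reachable.trans h1, h2⟩)
      · exact Or.inr (Or.inr ⟨hadj.reachable.trans h1, h2⟩)

/-- Replace each edge of a walk by a connection in another graph. -/
lemma reach_subst {G H : SimpleGraph V} (hrepl : ∀ p q : V, G.Adj p q → H.Reachable p q)
    {x y : V} (h : G.Reachable x y) : H.Reachable x y := by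
  obtain ⟨w⟩ := h
  induction w with
  | nil => exact SimpleGraph.Reachable.refl _
  | @cons x c y h p ih => exact (hrepl _ _ h).trans ih


section CC
variable [Fintype V]

/-- number of connected components -/
noncomputable def ccount (G : SimpleGraph V) : ℕ := Nat.card G.ConnectedComponent

lemma eg_empty : eg (∅ : Finset (Sym2 V)) = ⊥ := by
  rw [eg]
  simp

lemma eg_insert_diag {S : Finset (Sym2 V)} {e : Sym2 V} (hd : e.IsDiag) :
    eg (insert e S) = eg S := by
  ext x y
  rw [eg_adj, eg_adj]
  constructor
  · rintro ⟨hm, hne⟩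
    rcases Finset.mem_insert.mp hm with h | h
    · exact absurd (h ▸ hd) (by rw [Sym2.mk_isDiag_iff]; exact hne)
    · exact ⟨h, hne⟩
  · rintro ⟨hm, hne⟩
    exact ⟨Finset.mem_insert_of_mem hm, hne⟩


lemma card_le_ccount_bot : Fintype.card V ≤ ccount (⊥ : SimpleGraph V) := by
  rw [ccount, ← Nat.card_eq_fintype_card]
  exact Nat.card_le_card_of_injective (fun v => (⊥ : SimpleGraph V).connectedComponentMk v)
    (fun u v h => SimpleGraph.reachable_bot.mp (SimpleGraph.ConnectedComponent.eq.mp h))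

lemma ccount_le_ccount_insert {S : Finset (Sym2 V)} {e : Sym2 V} :
    ccount (eg S) ≤ ccount (eg (insert e S)) + 1 := by
  induction e using Sym2.inductionOn with
  | _ a b =>
  by_cases hab : a = b
  · rw [eg_insert_diag (by rw [Sym2.mk_isDiag_iff]; exact hab)]
    omega
  haveI : Fintype (eg S).ConnectedComponent := Fintype.ofFinite _
  haveI : Fintype (eg (insert s(a,b) S)).ConnectedComponent := Fintype.ofFinite _
  set φ : (eg S).ConnectedComponent → (eg (insert s(a,b) S)).ConnectedComponent :=
    SimpleGraph.ConnectedComponent.map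
      (SimpleGraph.Hom.ofLE (eg_mono (Finset.subset_insert _ _))) with hφ
  have hmk : ∀ v : V, φ ((eg S).connectedComponentMk v)
      = (eg (insert s(a,b) S)).connectedComponentMk v := by
    intro v
    rw [hφ, SimpleGraph.ConnectedComponent.map_mk]
    rfl
  have hinj : Set.InjOn φ ↑(Finset.univ.erase ((eg S).connectedComponentMk a)) := by
    intro c hc d hd h
    obtain ⟨u, rfl⟩ := c.exists_rep
    obtain ⟨v, rfl⟩ := d.exists_rep
    have hu : (eg S).connectedComponentMk u ≠ (eg S).connectedComponentMk a :=
      (Finset.mem_erase.mp hc).1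
    have hv : (eg S).connectedComponentMk v ≠ (eg S).connectedComponentMk a :=
      (Finset.mem_erase.mp hd).1
    have h' : (eg (insert s(a,b) S)).connectedComponentMk u
        = (eg (insert s(a,b) S)).connectedComponentMk v := by
      rw [← hmk, ← hmk]; exact h
    have hreach := SimpleGraph.ConnectedComponent.eq.mp h'
    rcases reach_insert_cases hreach with h1 | ⟨h1, h2⟩ | ⟨h1, h2⟩
    · exact SimpleGraph.ConnectedComponent.eq.mpr h1
    · exact absurd (SimpleGraph.ConnectedComponent.eq.mpr h1) hu
    · exact absurd (SimpleGraph.ConnectedComponent.eq.mpr h2.symm) hv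
  have hcard := Finset.card_le_card_of_injOn φ
    (fun c _ => Finset.mem_univ _) hinj
  have h1 : (Finset.univ.erase ((eg S).connectedComponentMk a)).card
      = Fintype.card (eg S).ConnectedComponent - 1 := by
    rw [Finset.card_erase_of_mem (Finset.mem_univ _), Finset.card_univ]
  have h2 : (Finset.univ : Finset (eg (insert s(a,b) S)).ConnectedComponent).card
      = Fintype.card (eg (insert s(a,b) S)).ConnectedComponent := Finset.card_univ
  have h3 : 1 ≤ Fintype.card (eg S).ConnectedComponent := by
    rw [← Finset.card_univ]
    exact Finset.card_pos.mpr ⟨_, Finset.mem_univ ((eg S).connectedComponentMk a)⟩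
  rw [ccount, ccount, Nat.card_eq_fintype_card, Nat.card_eq_fintype_card]
  omega

lemma card_le_ccount_add (S : Finset (Sym2 V)) :
    Fintype.card V ≤ ccount (eg S) + S.card := by
  induction S using Finset.induction_on with
  | empty => rw [eg_empty]; simpa using card_le_ccount_bot
  | @insert e S he ih =>
    have := @ccount_le_ccount_insert V _ S e
    rw [Finset.card_insert_of_notMem he]
    omega

lemma ccount_lt_forest_insert {S : Finset (Sym2 V)} {a b : V} (hab : a ≠ b)
    (hnm : s(a,b) ∉ S) (hF : IsForestF (insert s(a,b) S)) :
    ccount (eg (insert s(a,b) S)) < ccount (eg S) := by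
  haveI : Fintype (eg S).ConnectedComponent := Fintype.ofFinite _
  haveI : Fintype (eg (insert s(a,b) S)).ConnectedComponent := Fintype.ofFinite _
  set ψ : (eg S).ConnectedComponent → (eg (insert s(a,b) S)).ConnectedComponent :=
    SimpleGraph.ConnectedComponent.map
      (SimpleGraph.Hom.ofLE (eg_mono (Finset.subset_insert _ _))) with hψ
  have hmk : ∀ v : V, ψ ((eg S).connectedComponentMk v)
      = (eg (insert s(a,b) S)).connectedComponentMk v := by
    intro v
    rw [hψ, SimpleGraph.ConnectedComponent.map_mk]
    rfl
  have hsurj : Function.Surjective ψ := by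
    intro c
    obtain ⟨u, rfl⟩ := c.exists_rep
    exact ⟨(eg S).connectedComponentMk u, hmk u⟩
  have hninj : ¬ Function.Injective ψ := by
    intro hinj
    have h1 : ψ ((eg S).connectedComponentMk a) = ψ ((eg S).connectedComponentMk b) := by
      rw [hmk, hmk]
      exact SimpleGraph.ConnectedComponent.eq.mpr
        (SimpleGraph.Adj.reachable (eg_adj.mpr ⟨Finset.mem_insert_self _ _, hab⟩))
    have h2 := hinj h1
    have h3 := SimpleGraph.ConnectedComponent.eq.mp h2
    have h4 := hF.not_reachable_erase (Finset.mem_insert_self _ _) hab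
    rw [Finset.erase_insert hnm] at h4
    exact h4 h3
  have := Fintype.card_lt_of_surjective_not_injective ψ hsurj hninj
  rw [ccount, ccount, Nat.card_eq_fintype_card, Nat.card_eq_fintype_card]
  exact this

lemma forest_ccount_add_card_le {S : Finset (Sym2 V)} (hN : Nice S) (hF : IsForestF S) :
    ccount (eg S) + S.card ≤ Fintype.card V := by
  induction S using Finset.induction_on with
  | empty =>
    rw [ccount, ← Nat.card_eq_fintype_card]
    simpa using Nat.card_le_card_of_surjective
      (fun v => (eg (∅ : Finset (Sym2 V))).connectedComponentMk v)
      (fun c => c.exists_rep)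
  | @insert e S he ih =>
    have hd : ¬ e.IsDiag := hN e (Finset.mem_insert_self _ _)
    induction e using Sym2.inductionOn with
    | _ a b =>
    have hab : a ≠ b := by rwa [Sym2.mk_isDiag_iff] at hd
    have hlt := ccount_lt_forest_insert hab he hF
    have hS : IsForestF S := hF.anti (Finset.subset_insert _ _)
    have hNS : Nice S := fun f hf => hN f (Finset.mem_insert_of_mem hf)
    have := ih hNS hS
    rw [Finset.card_insert_of_notMem he]
    omega

lemma forest_card_le [Nonempty V] {S : Finset (Sym2 V)} (hN : Nice S) (hF : IsForestF S) :
    S.card + 1 ≤ Fintype.card V := by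
  have h1 := forest_ccount_add_card_le hN hF
  haveI : Nonempty (eg S).ConnectedComponent :=
    ⟨(eg S).connectedComponentMk (Classical.arbitrary V)⟩
  have h2 : 0 < ccount (eg S) := Nat.card_pos
  omega

lemma ccount_connected_on {S : Finset (Sym2 V)} {X : Finset V} {x0 : V} (hx0 : x0 ∈ X)
    (h : ∀ v ∈ X, (eg S).Reachable v x0) :
    ccount (eg S) + X.card ≤ Fintype.card V + 1 := by
  haveI : Fintype (eg S).ConnectedComponent := Fintype.ofFinite _
  have hsub : (Finset.univ : Finset (eg S).ConnectedComponent) ⊆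
      Finset.image (fun v => (eg S).connectedComponentMk v) (Finset.univ \ X) ∪
        {(eg S).connectedComponentMk x0} := by
    intro c _
    obtain ⟨u, rfl⟩ := c.exists_rep
    by_cases hu : u ∈ X
    · exact Finset.mem_union_right _ (by
        refine Finset.mem_singleton.mpr ?_
        exact SimpleGraph.ConnectedComponent.eq.mpr (h u hu))
    · exact Finset.mem_union_left _ (Finset.mem_image.mpr ⟨u, by simp [hu], rfl⟩)
  have h1 := Finset.card_le_card hsub
  have h2 := Finset.card_union_le
    (Finset.image (fun v => (eg S).connectedComponentMk v) (Finset.univ \ X))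
    ({(eg S).connectedComponentMk x0} : Finset (eg S).ConnectedComponent)
  have h3 := Finset.card_image_le (s := Finset.univ \ X)
    (f := fun v => (eg S).connectedComponentMk v)
  have h4 : (Finset.univ \ X).card = Fintype.card V - X.card := by
    rw [Finset.card_sdiff_of_subset (Finset.subset_univ _), Finset.card_univ]
  have h5 : X.card ≤ Fintype.card V := by
    simpa using Finset.card_le_card (Finset.subset_univ X)
  rw [ccount, Nat.card_eq_fintype_card, ← Finset.card_univ]
  simp only [Finset.card_singleton] at h2
  omega

lemma connected_on_card_le {S : Finset (Sym2 V)} {X : Finset V} {x0 : V} (hx0 : x0 ∈ X)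
    (h : ∀ v ∈ X, (eg S).Reachable v x0) : X.card ≤ S.card + 1 := by
  have h1 := card_le_ccount_add S
  have h2 := ccount_connected_on hx0 h
  omega

end CC

-- ### The blocking relation and exchange chains

/-- The ends of `e` are connected in (the graph of) `S`. -/
def blk (S : Finset (Sym2 V)) (e : Sym2 V) : Prop :=
  ∃ a b, e = s(a,b) ∧ (eg S).Reachable a b

lemma blk_rep {S : Finset (Sym2 V)} {e : Sym2 V} {x y : V} (h : blk S e) (hxy : e = s(x,y)) :
    (eg S).Reachable x y := by
  obtain ⟨a, b, hab, hr⟩ := h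
  rw [hxy] at hab
  rcases Sym2.eq_iff.mp hab with ⟨rfl, rfl⟩ | ⟨rfl, rfl⟩
  · exact hr
  · exact hr.symm

lemma blk_mono {S T : Finset (Sym2 V)} (h : S ⊆ T) {e : Sym2 V} (hb : blk S e) : blk T e := by
  obtain ⟨a, b, hab, hr⟩ := hb
  exact ⟨a, b, hab, hr.mono (eg_mono h)⟩

lemma blk_of_mem {S : Finset (Sym2 V)} {e : Sym2 V} (he : e ∈ S) (hd : ¬ e.IsDiag) : blk S e := by
  induction e using Sym2.inductionOn with
  | _ a b =>
    exact ⟨a, b, rfl, (eg_adj.mpr ⟨he, by rwa [Sym2.mk_isDiag_iff] at hd⟩).reachable⟩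

lemma exists_rep_nondiag {e : Sym2 V} (h : ¬ e.IsDiag) : ∃ a b, a ≠ b ∧ e = s(a,b) := by
  induction e using Sym2.inductionOn with
  | _ a b => exact ⟨a, b, by rwa [Sym2.mk_isDiag_iff] at h, rfl⟩

/-- Every edge on a path in a forest is necessary for the connection. -/
lemma forest_path_edge_necessary {S : Finset (Sym2 V)} (hS : IsForestF S) {x y : V}
    {p : (eg S).Walk x y} (hp : p.IsPath) {f : Sym2 V} (hf : f ∈ p.edges) :
    ¬ (eg (S.erase f)).Reachable x y := by
  classical
  intro hr
  obtain ⟨w⟩ := hr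
  obtain ⟨q0, hq0⟩ : ∃ q0 : (eg (S.erase f)).Walk x y, q0.IsPath := ⟨w.toPath, w.toPath.isPath⟩
  have hed : ∀ e ∈ q0.edges, e ∈ (eg S).edgeSet := by
    intro e hee
    exact mem_edgeSet_of_mem (Finset.mem_of_mem_erase (walk_edges_mem _ hee))
      (not_isDiag_of_mem_edgeSet' (q0.edges_subset_edgeSet hee))
  have hnot : f ∉ (q0.transfer (eg S) hed).edges := by
    rw [Walk.edges_transfer]
    intro hmem
    exact Finset.notMem_erase _ _ (walk_edges_mem _ hmem)
  have hun := hS.path_unique ⟨p, hp⟩ ⟨q0.transfer (eg S) hed, Walk.IsPath.transfer hed hq0⟩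
  apply hnot
  have hval : p = q0.transfer (eg S) hed := congrArg Subtype.val hun
  rwa [← hval]

-- ### Families of disjoint forests

section Fam
variable [Fintype V]

structure Fam (E : Finset (Sym2 V)) (k : ℕ) where
  F : Fin k → Finset (Sym2 V)
  sub : ∀ i, F i ⊆ E
  forest : ∀ i, IsForestF (F i)
  disj : ∀ i j, i ≠ j → Disjoint (F i) (F j)

variable {E : Finset (Sym2 V)} {k : ℕ}

noncomputable def Fam.cov (𝓕 : Fam E k) : Finset (Sym2 V) := Finset.univ.biUnion 𝓕.F

def Fam.total (𝓕 : Fam E k) : ℕ := ∑ i, (𝓕.F i).card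

lemma Fam.not_mem_cov {𝓕 : Fam E k} {e : Sym2 V} (h : e ∉ 𝓕.cov) (i : Fin k) : e ∉ 𝓕.F i := by
  intro hmem
  exact h (Finset.mem_biUnion.mpr ⟨i, Finset.mem_univ _, hmem⟩)

/-- The step relation: `f` is an edge of some forest which is necessary for the
connection between the ends of `e` in that forest. -/
def stp (F : Fin k → Finset (Sym2 V)) (e f : Sym2 V) : Prop :=
  ∃ i, f ∈ F i ∧ blk (F i) e ∧ ¬ blk ((F i).erase f) e

inductive Reaches (r : Sym2 V → Sym2 V → Prop) (e0 : Sym2 V) : ℕ → Sym2 V → Prop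
  | refl : Reaches r e0 0 e0
  | tail {t f g} : Reaches r e0 t f → r f g → Reaches r e0 (t+1) g

/-- The key augmentation lemma. -/
lemma augment (hE : Nice E) {e0 : Sym2 V} (he0E : e0 ∈ E) (t : ℕ) :
    ∀ 𝓕 : Fam E k, e0 ∉ 𝓕.cov →
      (∃ e i, Reaches (stp 𝓕.F) e0 t e ∧ ¬ blk (𝓕.F i) e) →
      ∃ 𝓖 : Fam E k, 𝓖.total = 𝓕.total + 1 := by
  induction t using Nat.strong_induction_on with
  | _ t IH =>
  intro 𝓕 hcov hex
  obtain ⟨e, i, hch, hbl⟩ := hex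
  by_cases hshort : ∃ t' < t, ∃ e' i', Reaches (stp 𝓕.F) e0 t' e' ∧ ¬ blk (𝓕.F i') e'
  · obtain ⟨t', ht', h'⟩ := hshort
    exact IH t' ht' 𝓕 hcov h'
  cases hch with
  | refl =>
    obtain ⟨a, b, hab, he0⟩ := exists_rep_nondiag (hE e0 he0E)
    have hnr : ¬ (eg (𝓕.F i)).Reachable a b := fun hr => hbl ⟨a, b, he0, hr⟩
    have he0i : e0 ∉ 𝓕.F i := 𝓕.not_mem_cov hcov i
    set Fup : Fin k → Finset (Sym2 V) := Function.update 𝓕.F i (insert e0 (𝓕.F i)) with hFup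
    have hup_i : Fup i = insert e0 (𝓕.F i) := by rw [hFup, Function.update_self]
    have hup_ne : ∀ j, j ≠ i → Fup j = 𝓕.F j := fun j hj => by
      rw [hFup, Function.update_of_ne hj]
    refine ⟨⟨Fup, ?_, ?_, ?_⟩, ?_⟩
    · intro j
      rcases eq_or_ne j i with h | h
      · rw [h, hup_i]
        exact Finset.insert_subset he0E (𝓕.sub i)
      · rw [hup_ne j h]
        exact 𝓕.sub j
    · intro j
      rcases eq_or_ne j i with h | h
      · rw [h, hup_i, he0]
        exact (𝓕.forest i).insertEdge hab hnr
      · rw [hup_ne j h]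
        exact 𝓕.forest j
    · intro j l hjl
      rcases eq_or_ne j i with hj | hj
      · rcases eq_or_ne l i with hl | hl
        · exact absurd (hj.trans hl.symm) hjl
        · rw [hj, hup_i, hup_ne l hl]
          exact Finset.disjoint_insert_left.mpr ⟨𝓕.not_mem_cov hcov l, 𝓕.disj i l (hj ▸ hjl)⟩
      · rcases eq_or_ne l i with hl | hl
        · rw [hl, hup_i, hup_ne j hj]
          exact (Finset.disjoint_insert_left.mpr
            ⟨𝓕.not_mem_cov hcov j, 𝓕.disj i j (Ne.symm (hl ▸ hjl))⟩).symm
        · rw [hup_ne j hj, hup_ne l hl]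
          exact 𝓕.disj j l hjl
    · show (∑ l, (Fup l).card) = (∑ l, (𝓕.F l).card) + 1
      have h1 : ∑ l, (Fup l).card = (Fup i).card + ∑ l ∈ Finset.univ \ {i}, (Fup l).card :=
        Finset.sum_eq_add_sum_sdiff_singleton_of_mem (Finset.mem_univ i) _
      have h2 : ∑ l, (𝓕.F l).card = (𝓕.F i).card + ∑ l ∈ Finset.univ \ {i}, (𝓕.F l).card :=
        Finset.sum_eq_add_sum_sdiff_singleton_of_mem (Finset.mem_univ i) _
      have h3 : ∑ l ∈ Finset.univ \ {i}, (Fup l).card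
          = ∑ l ∈ Finset.univ \ {i}, (𝓕.F l).card := by
        refine Finset.sum_congr rfl (fun l hl => ?_)
        rw [hup_ne l (by simpa using (Finset.mem_sdiff.mp hl).2)]
      have h4 : (Fup i).card = (𝓕.F i).card + 1 := by
        rw [hup_i, Finset.card_insert_of_notMem he0i]
      omega
  | tail hch' hstp =>
    rename_i s emid
    obtain ⟨j, hefj, hblkj, hnec⟩ := hstp
    have heE : e ∈ E := 𝓕.sub j hefj
    obtain ⟨a, b, hab, he⟩ := exists_rep_nondiag (hE e heE)
    have hij : i ≠ j := by
      rintro rfl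
      exact hbl (blk_of_mem hefj (hE e heE))
    have heFi : e ∉ 𝓕.F i := Finset.disjoint_right.mp (𝓕.disj i j hij) hefj
    have hnrab : ¬ (eg (𝓕.F i)).Reachable a b := fun hr => hbl ⟨a, b, he, hr⟩
    set Fnew : Fin k → Finset (Sym2 V) :=
      Function.update (Function.update 𝓕.F j ((𝓕.F j).erase e)) i (insert e (𝓕.F i)) with hFnew
    have hFnew_i : Fnew i = insert e (𝓕.F i) := by rw [hFnew, Function.update_self]
    have hFnew_j : Fnew j = (𝓕.F j).erase e := by
      rw [hFnew, Function.update_of_ne hij.symm, Function.update_self]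
    have hFnew_other : ∀ l, l ≠ i → l ≠ j → Fnew l = 𝓕.F l := by
      intro l hli hlj
      rw [hFnew, Function.update_of_ne hli, Function.update_of_ne hlj]
    -- the old chain (up to `emid`) is still a chain for the new family
    have main_chain : ∀ {s' e'}, Reaches (stp 𝓕.F) e0 s' e' → s' < s + 1 → Reaches (stp Fnew) e0 s' e' := by
      intro s' e' h
      induction h with
      | refl => intro _; exact Reaches.refl
      | tail hr hstepgf ihh =>
        rename_i p g f
        intro hpt
        have hg : Reaches (stp Fnew) e0 p g := ihh (by omega)
        obtain ⟨l, hfl, hblkl, hnecl⟩ := hstepgf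
        rcases eq_or_ne l j with rfl | hlj
        · -- step used forest `j`
          have hfe : f ≠ e := by
            rintro rfl
            exact hshort ⟨p+1, hpt, f, i, hr.tail ⟨l, hfl, hblkl, hnecl⟩, hbl⟩
          have hb2 : blk ((𝓕.F l).erase e) g := by
            by_contra hb2
            exact hshort ⟨p+1, hpt, e, i, hr.tail ⟨l, hefj, hblkl, hb2⟩, hbl⟩
          have hnec2 : ¬ blk (((𝓕.F l).erase e).erase f) g := by
            intro hcon
            apply hnecl
            refine blk_mono ?_ hcon
            intro x hx
            simp only [Finset.mem_erase] at hx ⊢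
            exact ⟨hx.1, hx.2.2⟩
          refine hg.tail ⟨l, ?_, ?_, ?_⟩
          · rw [hFnew_j]
            exact Finset.mem_erase.mpr ⟨hfe, hfl⟩
          · rw [hFnew_j]
            exact hb2
          · rw [hFnew_j]
            exact hnec2
        rcases eq_or_ne l i with rfl | hli
        · -- step used forest `i`
          have hfe : f ≠ e := fun h => heFi (h ▸ hfl)
          have hnec2 : ¬ blk ((insert e (𝓕.F l)).erase f) g := by
            rw [Finset.erase_insert_of_ne (Ne.symm hfe)]
            intro hcon
            obtain ⟨x, y, hgxy, hreach⟩ := hcon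
            rw [he] at hreach
            have hxyFl : (eg (𝓕.F l)).Reachable x y := blk_rep hblkl hgxy
            have hsub : (𝓕.F l).erase f ⊆ 𝓕.F l := Finset.erase_subset _ _
            rcases reach_insert_cases hreach with h1 | ⟨h1, h2⟩ | ⟨h1, h2⟩
            · exact hnecl ⟨x, y, hgxy, h1⟩
            · exact hnrab (((h1.mono (eg_mono hsub)).symm.trans hxyFl).trans
                (h2.mono (eg_mono hsub)).symm)
            · exact hnrab (((h2.mono (eg_mono hsub)).trans hxyFl.symm).trans
                (h1.mono (eg_mono hsub)))
          refine hg.tail ⟨l, ?_, ?_, ?_⟩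
          · rw [hFnew_i]
            exact Finset.mem_insert_of_mem hfl
          · rw [hFnew_i]
            exact blk_mono (Finset.subset_insert _ _) hblkl
          · rw [hFnew_i]
            exact hnec2
        · refine hg.tail ⟨l, ?_, ?_, ?_⟩ <;> rw [hFnew_other l hli hlj]
          · exact hfl
          · exact hblkl
          · exact hnecl
    have chainG : Reaches (stp Fnew) e0 s emid := main_chain hch' (by omega)
    have addableG : ¬ blk (Fnew j) emid := by
      rw [hFnew_j]
      exact hnec
    -- build the new family
    have hsubG : ∀ l, Fnew l ⊆ E := by
      intro l
      rcases eq_or_ne l i with rfl | hli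
      · rw [hFnew_i]; exact Finset.insert_subset heE (𝓕.sub l)
      rcases eq_or_ne l j with rfl | hlj
      · rw [hFnew_j]; exact (Finset.erase_subset _ _).trans (𝓕.sub l)
      · rw [hFnew_other l hli hlj]; exact 𝓕.sub l
    have hforG : ∀ l, IsForestF (Fnew l) := by
      intro l
      rcases eq_or_ne l i with rfl | hli
      · rw [hFnew_i, he]
        exact (𝓕.forest _).insertEdge hab hnrab
      rcases eq_or_ne l j with rfl | hlj
      · rw [hFnew_j]; exact (𝓕.forest l).anti (Finset.erase_subset _ _)
      · rw [hFnew_other l hli hlj]; exact 𝓕.forest l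
    have hdisj : ∀ l m, l ≠ m → Disjoint (Fnew l) (Fnew m) := by
      have key : ∀ m, m ≠ i → Disjoint (Fnew i) (Fnew m) := by
        intro m hmi
        rw [hFnew_i]
        rcases eq_or_ne m j with rfl | hmj
        · rw [hFnew_j]
          exact Finset.disjoint_insert_left.mpr ⟨Finset.notMem_erase _ _,
            ((𝓕.disj i m (Ne.symm hmi)).mono_right (Finset.erase_subset _ _))⟩
        · rw [hFnew_other m hmi hmj]
          exact Finset.disjoint_insert_left.mpr
            ⟨Finset.disjoint_right.mp (𝓕.disj m j hmj) hefj, 𝓕.disj i m (Ne.symm hmi)⟩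
      intro l m hlm
      rcases eq_or_ne l i with rfl | hli
      · exact key m (Ne.symm hlm)
      rcases eq_or_ne m i with rfl | hmi
      · exact (key l hli).symm
      rcases eq_or_ne l j with rfl | hlj
      · rw [hFnew_j, hFnew_other m hmi (Ne.symm hlm)]
        exact (𝓕.disj l m hlm).mono_left (Finset.erase_subset _ _)
      rcases eq_or_ne m j with rfl | hmj
      · rw [hFnew_j, hFnew_other l hli hlj]
        exact (𝓕.disj l m hlm).mono_right (Finset.erase_subset _ _)
      · rw [hFnew_other l hli hlj, hFnew_other m hmi hmj]
        exact 𝓕.disj l m hlm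
    have hcovG : e0 ∉ Fam.cov (⟨Fnew, hsubG, hforG, hdisj⟩ : Fam E k) := by
      intro hmem
      obtain ⟨l, -, hl⟩ := Finset.mem_biUnion.mp hmem
      replace hl : e0 ∈ Fnew l := hl
      rcases eq_or_ne l i with rfl | hli
      · rw [hFnew_i] at hl
        rcases Finset.mem_insert.mp hl with rfl | hl
        · exact 𝓕.not_mem_cov hcov j hefj
        · exact 𝓕.not_mem_cov hcov l hl
      rcases eq_or_ne l j with rfl | hlj
      · rw [hFnew_j] at hl
        exact 𝓕.not_mem_cov hcov l (Finset.mem_of_mem_erase hl)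
      · rw [hFnew_other l hli hlj] at hl
        exact 𝓕.not_mem_cov hcov l hl
    have htot : Fam.total (⟨Fnew, hsubG, hforG, hdisj⟩ : Fam E k) = 𝓕.total := by
      show (∑ l, (Fnew l).card) = ∑ l, (𝓕.F l).card
      have hjmem : j ∈ Finset.univ \ {i} := by
        simp [Ne.symm hij]
      have hsplit : ∀ f : Fin k → ℕ,
          ∑ l, f l = f i + (f j + ∑ l ∈ (Finset.univ \ {i}) \ {j}, f l) := by
        intro f
        rw [Finset.sum_eq_add_sum_sdiff_singleton_of_mem (Finset.mem_univ i) f,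
          Finset.sum_eq_add_sum_sdiff_singleton_of_mem hjmem f]
      rw [hsplit (fun l => (Fnew l).card), hsplit (fun l => (𝓕.F l).card)]
      have h3 : ∑ l ∈ (Finset.univ \ {i}) \ {j}, (Fnew l).card
          = ∑ l ∈ (Finset.univ \ {i}) \ {j}, (𝓕.F l).card := by
        refine Finset.sum_congr rfl (fun l hl => ?_)
        have hl1 := Finset.mem_sdiff.mp hl
        have hl2 := Finset.mem_sdiff.mp hl1.1
        rw [hFnew_other l (by simpa using hl2.2) (by simpa using hl1.2)]
      have h4 : (Fnew i).card = (𝓕.F i).card + 1 := by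
        rw [hFnew_i, Finset.card_insert_of_notMem heFi]
      have h5 : (Fnew j).card + 1 = (𝓕.F j).card := by
        rw [hFnew_j, Finset.card_erase_of_mem hefj]
        have : 1 ≤ (𝓕.F j).card := Finset.card_pos.mpr ⟨e, hefj⟩
        omega
      omega
    obtain ⟨𝓗, h𝓗⟩ := IH s (by omega) ⟨Fnew, hsubG, hforG, hdisj⟩ hcovG
      ⟨emid, j, chainG, addableG⟩
    exact ⟨𝓗, by rw [h𝓗, htot]⟩

lemma step_path (𝓕 : Fam E k) {g : Sym2 V} {i : Fin k} (hblk : blk (𝓕.F i) g) {x y : V}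
    (hg : g = s(x,y)) :
    ∃ p : (eg (𝓕.F i)).Walk x y, p.IsPath ∧ ∀ f ∈ p.edges, stp 𝓕.F g f := by
  obtain ⟨w⟩ := blk_rep hblk hg
  refine ⟨w.toPath, w.toPath.isPath, ?_⟩
  intro f hf
  have hfF : f ∈ 𝓕.F i := walk_edges_mem _ hf
  refine ⟨i, hfF, hblk, ?_⟩
  intro hcon
  exact forest_path_edge_necessary (𝓕.forest i) w.toPath.isPath hf (blk_rep hcon hg)

theorem exists_forest_cover_fam (E : Finset (Sym2 V)) (hE : Nice E) (k : ℕ)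
    (hd : ∀ X : Finset V, (E.filter (fun e => ∀ v ∈ e, v ∈ X)).card ≤ k * (X.card - 1)) :
    ∃ 𝓕 : Fam E k, 𝓕.cov = E := by
  classical
  set T : Set ℕ := {n | ∃ 𝓕 : Fam E k, 𝓕.total = n} with hT
  have hTne : T.Nonempty := ⟨0, ⟨⟨fun _ => ∅, fun _ => Finset.empty_subset _,
    fun _ => by unfold IsForestF; rw [eg_empty]; exact SimpleGraph.isAcyclic_bot,
    fun _ _ _ => Finset.disjoint_empty_left _⟩, by simp [Fam.total]⟩⟩
  have hTbdd : BddAbove T := by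
    refine ⟨k * E.card, ?_⟩
    rintro n ⟨𝓕, rfl⟩
    calc 𝓕.total ≤ ∑ _i : Fin k, E.card :=
          Finset.sum_le_sum (fun i _ => Finset.card_le_card (𝓕.sub i))
      _ = k * E.card := by simp [Finset.sum_const, Finset.card_univ]
  obtain ⟨𝓕, h𝓕max⟩ : ∃ 𝓕 : Fam E k, 𝓕.total = sSup T := Nat.sSup_mem hTne hTbdd
  have hmax : ∀ 𝓖 : Fam E k, 𝓖.total ≤ 𝓕.total := fun 𝓖 => h𝓕max ▸ le_csSup hTbdd ⟨𝓖, rfl⟩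
  refine ⟨𝓕, ?_⟩
  by_contra hne
  have hsub : 𝓕.cov ⊆ E := by
    intro x hx
    obtain ⟨l, -, hl⟩ := Finset.mem_biUnion.mp hx
    exact 𝓕.sub l hl
  obtain ⟨e0, he0E, he0c⟩ : ∃ e0 ∈ E, e0 ∉ 𝓕.cov := by
    by_contra h
    push_neg at h
    exact hne (hsub.antisymm h)
  by_cases hcase : ∃ t e i, Reaches (stp 𝓕.F) e0 t e ∧ ¬ blk (𝓕.F i) e
  · obtain ⟨t, hx⟩ := hcase
    obtain ⟨𝓖, h𝓖⟩ := augment hE he0E t 𝓕 he0c hx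
    have := hmax 𝓖
    omega
  · have hall : ∀ {t e}, Reaches (stp 𝓕.F) e0 t e → ∀ i, blk (𝓕.F i) e := by
      intro t e h i
      by_contra hb
      exact hcase ⟨t, e, i, h, hb⟩
    set A : Finset (Sym2 V) := E.filter (fun f => ∃ t, Reaches (stp 𝓕.F) e0 t f) with hA
    have he0A : e0 ∈ A := Finset.mem_filter.mpr ⟨he0E, 0, .refl⟩
    have hchain_mem : ∀ {t f}, Reaches (stp 𝓕.F) e0 t f → f ∈ A := by
      intro t f h
      refine Finset.mem_filter.mpr ⟨?_, t, h⟩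
      cases h with
      | refl => exact he0E
      | tail h' hst =>
        obtain ⟨j, hfj, -, -⟩ := hst
        exact 𝓕.sub j hfj
    have hAnice : Nice A := fun f hf => hE f (Finset.mem_filter.mp hf).1
    obtain ⟨a0, b0, hab0, he0rep⟩ := exists_rep_nondiag (hE e0 he0E)
    have hclosure : ∀ {t g}, Reaches (stp 𝓕.F) e0 t g → ∀ (i : Fin k), ∀ x y, g = s(x,y) →
        ∃ p : (eg (𝓕.F i)).Walk x y, p.IsPath ∧ ∀ f ∈ p.edges, f ∈ A := by
      intro t g hg i x y hxy
      obtain ⟨p, hp, hstepf⟩ := step_path 𝓕 (hall hg i) hxy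
      exact ⟨p, hp, fun f hf => hchain_mem (hg.tail (hstepf f hf))⟩
    have hconnFA : ∀ (i : Fin k), ∀ {g : Sym2 V} {x y : V}, g ∈ A → g = s(x,y) →
        (eg (𝓕.F i ∩ A)).Reachable x y := by
      intro i g x y hgA hxy
      obtain ⟨t, hg⟩ := (Finset.mem_filter.mp hgA).2
      obtain ⟨p, hp, hedges⟩ := hclosure hg i x y hxy
      have hed : ∀ f ∈ p.edges, f ∈ (eg (𝓕.F i ∩ A)).edgeSet := by
        intro f hf
        exact mem_edgeSet_of_mem (Finset.mem_inter.mpr ⟨walk_edges_mem _ hf, hedges f hf⟩)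
          (not_isDiag_of_mem_edgeSet' (p.edges_subset_edgeSet hf))
      exact (p.transfer _ hed).reachable
    have hconnA : ∀ {t g}, Reaches (stp 𝓕.F) e0 t g → ∀ x, x ∈ g → (eg A).Reachable x a0 := by
      intro t g hg
      induction hg with
      | refl =>
        intro x hx
        have hadj : (eg A).Adj a0 b0 := eg_adj.mpr ⟨by rwa [← he0rep], hab0⟩
        rcases Sym2.mem_iff.mp (by rwa [he0rep] at hx : x ∈ s(a0,b0)) with rfl | rfl
        · exact SimpleGraph.Reachable.refl _
        · exact hadj.symm.reachable
      | tail hg' hst ih =>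
        rename_i t g f
        intro x hx
        obtain ⟨j, hfj, hblkj, hnecj⟩ := hst
        obtain ⟨u, v, huv, hguv⟩ := exists_rep_nondiag (hAnice g (hchain_mem hg'))
        obtain ⟨p, hp, hedges⟩ := hclosure hg' j u v hguv
        have hfp : f ∈ p.edges := by
          by_contra hfp
          apply hnecj
          have hed : ∀ e' ∈ p.edges, e' ∈ (eg ((𝓕.F j).erase f)).edgeSet := by
            intro e' he'
            exact mem_edgeSet_of_mem
              (Finset.mem_erase.mpr ⟨by rintro rfl; exact hfp he', walk_edges_mem _ he'⟩)
              (not_isDiag_of_mem_edgeSet' (p.edges_subset_edgeSet he'))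
          exact ⟨u, v, hguv, (p.transfer _ hed).reachable⟩
        have hedA : ∀ e' ∈ p.edges, e' ∈ (eg A).edgeSet := fun e' he' =>
          mem_edgeSet_of_mem (hedges e' he')
            (not_isDiag_of_mem_edgeSet' (p.edges_subset_edgeSet he'))
        have hxsup : x ∈ (p.transfer (eg A) hedA).support := by
          rw [Walk.support_transfer]
          obtain ⟨y', hy'⟩ := Sym2.mem_iff_exists.mp hx
          exact Walk.fst_mem_support_of_mem_edges p (hy' ▸ hfp)
        have hux : (eg A).Reachable u x := ((p.transfer (eg A) hedA).takeUntil x hxsup).reachable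
        exact hux.symm.trans (ih u (by rw [hguv]; exact Sym2.mem_mk_left _ _))
    set X : Finset V := Finset.univ.filter (fun v => ∃ f ∈ A, v ∈ f) with hX
    have ha0X : a0 ∈ X := Finset.mem_filter.mpr ⟨Finset.mem_univ _, e0, he0A,
      by rw [he0rep]; exact Sym2.mem_mk_left _ _⟩
    have hXreach : ∀ v ∈ X, (eg A).Reachable v a0 := by
      intro v hv
      obtain ⟨f, hfA, hvf⟩ := (Finset.mem_filter.mp hv).2
      obtain ⟨t, hf⟩ := (Finset.mem_filter.mp hfA).2
      exact hconnA hf v hvf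
    have hcard : ∀ i : Fin k, X.card ≤ (𝓕.F i ∩ A).card + 1 := by
      intro i
      refine connected_on_card_le ha0X ?_
      intro v hv
      refine reach_subst ?_ (hXreach v hv)
      intro p q hadj
      rcases eg_adj.mp hadj with ⟨hpq, hne'⟩
      exact hconnFA i hpq rfl
    have hBsub : Finset.univ.biUnion (fun i => 𝓕.F i ∩ A) ⊆ A.erase e0 := by
      intro x hx
      obtain ⟨i, -, hxi⟩ := Finset.mem_biUnion.mp hx
      have h1 := Finset.mem_inter.mp hxi
      refine Finset.mem_erase.mpr ⟨?_, h1.2⟩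
      rintro rfl
      exact (𝓕.not_mem_cov he0c i) h1.1
    have hsum : ∑ i, (𝓕.F i ∩ A).card + 1 ≤ A.card := by
      have h1 : (Finset.univ.biUnion (fun i => 𝓕.F i ∩ A)).card = ∑ i, (𝓕.F i ∩ A).card :=
        Finset.card_biUnion (fun i _ j _ hij =>
          (𝓕.disj i j hij).mono Finset.inter_subset_left Finset.inter_subset_left)
      have h2 := Finset.card_le_card hBsub
      have h3 : (A.erase e0).card + 1 = A.card := Finset.card_erase_add_one he0A
      omega
    have hAX : A ⊆ E.filter (fun e => ∀ v ∈ e, v ∈ X) := by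
      intro f hf
      refine Finset.mem_filter.mpr ⟨(Finset.mem_filter.mp hf).1, ?_⟩
      intro v hv
      exact Finset.mem_filter.mpr ⟨Finset.mem_univ _, f, hf, hv⟩
    have hk : k * (X.card - 1) + 1 ≤ A.card := by
      have hmul := Finset.card_nsmul_le_sum Finset.univ (fun i => (𝓕.F i ∩ A).card) (X.card - 1)
        (fun i _ => by have := hcard i; show X.card - 1 ≤ (𝓕.F i ∩ A).card; omega)
      simp only [Finset.card_univ, Fintype.card_fin, smul_eq_mul] at hmul
      omega
    have hA_le := Finset.card_le_card hAX
    have hdX := hd X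
    omega


end Fam

noncomputable def edgeFin [Fintype V] (G : SimpleGraph V) : Finset (Sym2 V) :=
  G.edgeSet.toFinite.toFinset

lemma mem_edgeFin [Fintype V] {G : SimpleGraph V} {e : Sym2 V} :
    e ∈ edgeFin G ↔ e ∈ G.edgeSet := Set.Finite.mem_toFinset _

lemma exists_rep_nondiag' {e : Sym2 V} (h : ¬ e.IsDiag) : ∃ a b, a ≠ b ∧ e = s(a,b) := by
  induction e using Sym2.inductionOn with
  | _ a b => exact ⟨a, b, by rwa [Sym2.mk_isDiag_iff] at h, rfl⟩

section Density
variable [Fintype V] {G : SimpleGraph V}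

lemma inside_insert {X : Finset V} {u : V} (hu : u ∉ X) :
    ((edgeFin G).filter (fun e => ∀ v ∈ e, v ∈ insert u X)).card
      = ((edgeFin G).filter (fun e => ∀ v ∈ e, v ∈ X)).card
        + (X.filter (fun x => G.Adj u x)).card := by
  classical
  set uE : Finset (Sym2 V) := (X.filter (fun x => G.Adj u x)).image (fun x => s(u,x)) with huE
  have hcardim : uE.card = (X.filter (fun x => G.Adj u x)).card := by
    rw [huE]
    refine Finset.card_image_of_injOn ?_
    intro x hx y hy hxy
    rcases Sym2.eq_iff.mp hxy with ⟨-, h⟩ | ⟨h1, h2⟩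
    · exact h
    · rw [← h1, h2]
  have hsplit : (edgeFin G).filter (fun e => ∀ v ∈ e, v ∈ insert u X)
      = ((edgeFin G).filter (fun e => ∀ v ∈ e, v ∈ X)) ∪ uE := by
    ext e
    rw [Finset.mem_union, Finset.mem_filter, Finset.mem_filter]
    constructor
    · rintro ⟨heE, hins⟩
      by_cases hue : u ∈ e
      · right
        obtain ⟨y, rfl⟩ := Sym2.mem_iff_exists.mp hue
        have hadj : G.Adj u y := (SimpleGraph.mem_edgeSet G).mp (mem_edgeFin.mp heE)
        have hy : y ∈ insert u X := hins y (Sym2.mem_mk_right u y)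
        have hyne : y ≠ u := fun h => hadj.ne (h ▸ rfl)
        exact Finset.mem_image.mpr ⟨y,
          Finset.mem_filter.mpr ⟨(Finset.mem_insert.mp hy).resolve_left hyne, hadj⟩, rfl⟩
      · left
        exact ⟨heE, fun v hv =>
          (Finset.mem_insert.mp (hins v hv)).resolve_left (fun h => hue (h ▸ hv))⟩
    · rintro (⟨heE, hX⟩ | hin)
      · exact ⟨heE, fun v hv => Finset.mem_insert_of_mem (hX v hv)⟩
      · obtain ⟨y, hy, rfl⟩ := Finset.mem_image.mp hin
        obtain ⟨hyX, hadj⟩ := Finset.mem_filter.mp hy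
        refine ⟨mem_edgeFin.mpr ((SimpleGraph.mem_edgeSet G).mpr hadj), ?_⟩
        intro v hv
        rcases Sym2.mem_iff.mp hv with rfl | rfl
        · exact Finset.mem_insert_self _ _
        · exact Finset.mem_insert_of_mem hyX
  have hdisj : Disjoint ((edgeFin G).filter (fun e => ∀ v ∈ e, v ∈ X)) uE := by
    rw [Finset.disjoint_right]
    intro e hein heX
    obtain ⟨y, -, rfl⟩ := Finset.mem_image.mp hein
    exact hu ((Finset.mem_filter.mp heX).2 u (Sym2.mem_mk_left u y))
  rw [hsplit, Finset.card_union_of_disjoint hdisj, hcardim]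

lemma handshake (X : Finset V) :
    2 * ((edgeFin G).filter (fun e => ∀ v ∈ e, v ∈ X)).card ≤ X.card * (X.card - 1) := by
  classical
  set S := (edgeFin G).filter (fun e => ∀ v ∈ e, v ∈ X) with hS
  have hcount : ∀ e ∈ S, (X.filter (fun v => v ∈ e)).card = 2 := by
    intro e he
    obtain ⟨heE, hin⟩ := Finset.mem_filter.mp he
    obtain ⟨a, b, hab, rfl⟩ := exists_rep_nondiag'
      (G.not_isDiag_of_mem_edgeSet (mem_edgeFin.mp heE))
    have : X.filter (fun v => v ∈ s(a,b)) = {a, b} := by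
      ext v
      rw [Finset.mem_filter, Finset.mem_insert, Finset.mem_singleton]
      constructor
      · rintro ⟨-, hv⟩
        exact Sym2.mem_iff.mp hv
      · rintro (rfl | rfl)
        · exact ⟨hin v (Sym2.mem_mk_left _ _), Sym2.mem_mk_left _ _⟩
        · exact ⟨hin v (Sym2.mem_mk_right _ _), Sym2.mem_mk_right _ _⟩
    rw [this, Finset.card_insert_of_notMem (by simpa using hab), Finset.card_singleton]
  have hswap : ∑ e ∈ S, (X.filter (fun v => v ∈ e)).card
      = ∑ v ∈ X, (S.filter (fun e => v ∈ e)).card := by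
    simp_rw [Finset.card_filter]
    exact Finset.sum_comm
  have hdeg : ∀ v ∈ X, (S.filter (fun e => v ∈ e)).card ≤ X.card - 1 := by
    intro v hv
    have hle : (S.filter (fun e => v ∈ e)).card ≤ (X.erase v).card := by
      refine Finset.card_le_card_of_injOn
        (fun e => if h : v ∈ e then Sym2.Mem.other' h else v) ?_ ?_
      · intro e he
        obtain ⟨heS, hve⟩ := Finset.mem_filter.mp he
        have hbeta : (fun e => if h : v ∈ e then Sym2.Mem.other' h else v) e
            = Sym2.Mem.other' hve := dif_pos hve
        rw [hbeta]
        obtain ⟨heE, hin⟩ := Finset.mem_filter.mp heS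
        refine Finset.mem_erase.mpr ⟨?_, hin _ (Sym2.other_mem' hve)⟩
        intro hother
        apply G.not_isDiag_of_mem_edgeSet (mem_edgeFin.mp heE)
        rw [← Sym2.other_spec' hve, hother]
        exact Sym2.mk_isDiag_iff.mpr rfl
      · intro e1 he1 e2 he2 heq
        have hv1 : v ∈ e1 := (Finset.mem_filter.mp (Finset.mem_coe.mp he1)).2
        have hv2 : v ∈ e2 := (Finset.mem_filter.mp (Finset.mem_coe.mp he2)).2
        have hb1 : (fun e => if h : v ∈ e then Sym2.Mem.other' h else v) e1
            = Sym2.Mem.other' hv1 := dif_pos hv1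
        have hb2 : (fun e => if h : v ∈ e then Sym2.Mem.other' h else v) e2
            = Sym2.Mem.other' hv2 := dif_pos hv2
        rw [hb1, hb2] at heq
        rw [← Sym2.other_spec' hv1, ← Sym2.other_spec' hv2, heq]
    rwa [Finset.card_erase_of_mem hv] at hle
  calc 2 * S.card = ∑ _e ∈ S, 2 := by rw [Finset.sum_const, smul_eq_mul, mul_comm]
    _ = ∑ e ∈ S, (X.filter (fun v => v ∈ e)).card := (Finset.sum_congr rfl hcount).symm
    _ = ∑ v ∈ X, (S.filter (fun e => v ∈ e)).card := hswap
    _ ≤ ∑ _v ∈ X, (X.card - 1) := Finset.sum_le_sum hdeg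
    _ = X.card * (X.card - 1) := by rw [Finset.sum_const, smul_eq_mul]

lemma edgeFin_empty_of_card_le_one (hn : Fintype.card V ≤ 1) : edgeFin G = ∅ := by
  rw [Finset.eq_empty_iff_forall_notMem]
  intro e he
  obtain ⟨a, b, hab, rfl⟩ := exists_rep_nondiag' (G.not_isDiag_of_mem_edgeSet (mem_edgeFin.mp he))
  have : 1 < Fintype.card V := Fintype.one_lt_card_iff_nontrivial.mpr ⟨⟨a, b, hab⟩⟩
  omega

lemma density (hhalf : ∀ X : Set V, X ≠ Set.univ →
      ∃ u ∉ X, X.ncard ≤ 2 * {x ∈ X | G.Adj u x}.ncard) :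
    ∀ X : Finset V, ((edgeFin G).filter (fun e => ∀ v ∈ e, v ∈ X)).card
      ≤ (⌈((edgeFin G).card : ℚ) / ((Fintype.card V : ℚ) - 1)⌉₊) * (X.card - 1) := by
  classical
  set K := ⌈((edgeFin G).card : ℚ) / ((Fintype.card V : ℚ) - 1)⌉₊ with hK
  set n := Fintype.card V with hn
  suffices H : ∀ g : ℕ, ∀ X : Finset V, n - X.card = g →
      ((edgeFin G).filter (fun e => ∀ v ∈ e, v ∈ X)).card ≤ K * (X.card - 1) by
    intro X
    exact H (n - X.card) X rfl
  intro g
  induction g using Nat.strong_induction_on with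
  | _ g IHg =>
  intro X hg
  by_cases hXuniv : X = Finset.univ
  · subst hXuniv
    rw [Finset.filter_true_of_mem (fun e _ => fun v _ => Finset.mem_univ v), Finset.card_univ, ← hn]
    rcases le_or_gt n 1 with hn1 | hn1
    · rw [edgeFin_empty_of_card_le_one (hn ▸ hn1)]
      simp
    · have hpos : (0:ℚ) < (n:ℚ) - 1 := by
        have : (1:ℚ) < (n:ℚ) := by exact_mod_cast hn1
        linarith
      have h1 : ((edgeFin G).card : ℚ) / ((n:ℚ) - 1) ≤ (K:ℚ) := by
        rw [hK, hn]
        exact Nat.le_ceil _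
      rw [div_le_iff₀ hpos] at h1
      have h2 : ((edgeFin G).card : ℚ) ≤ (K : ℚ) * ((n - 1 : ℕ) : ℚ) := by
        rwa [Nat.cast_sub (by omega), Nat.cast_one]
      exact_mod_cast h2
  · have hXset : (↑X : Set V) ≠ Set.univ := by
      rw [Ne, Finset.coe_eq_univ]
      exact hXuniv
    obtain ⟨u, huX, hhalfX⟩ := hhalf ↑X hXset
    rw [Finset.mem_coe] at huX
    have hconv : {x ∈ (↑X : Set V) | G.Adj u x}.ncard = (X.filter (fun x => G.Adj u x)).card := by
      rw [show {x ∈ (↑X : Set V) | G.Adj u x} = ↑(X.filter (fun x => G.Adj u x)) by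
        ext x; simp]
      exact Set.ncard_coe_finset _
    rw [Set.ncard_coe_finset, hconv] at hhalfX
    have hXcard : X.card < n := by
      have := Finset.card_lt_card (Finset.ssubset_univ_iff.mpr hXuniv)
      rwa [Finset.card_univ, ← hn] at this
    have hIH := IHg (n - (insert u X).card) (by rw [Finset.card_insert_of_notMem huX]; omega)
      (insert u X) rfl
    rw [Finset.card_insert_of_notMem huX] at hIH
    rw [inside_insert huX] at hIH
    have hhs := handshake (G := G) X
    -- arithmetic
    set m := ((edgeFin G).filter (fun e => ∀ v ∈ e, v ∈ X)).card with hm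
    set d := (X.filter (fun x => G.Adj u x)).card with hd
    set x := X.card with hx
    by_contra hcon
    push_neg at hcon
    -- hcon : K * (x - 1) < m
    rcases Nat.eq_zero_or_pos x with hx0 | hx1
    · rw [hx0] at hhs hcon
      omega
    have hsimp : x + 1 - 1 = x := by omega
    rw [hsimp] at hIH
    have h1 : (m : ℤ) + d ≤ K * x := by exact_mod_cast hIH
    have h2 : 2 * (m:ℤ) ≤ x * (x - 1) := by
      have := hhs
      zify [hx1] at this
      linarith
    have h3 : (x:ℤ) ≤ 2 * d := by exact_mod_cast hhalfX
    have h4 : (K:ℤ) * (x - 1) + 1 ≤ m := by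
      have : K * (x-1) + 1 ≤ m := hcon
      zify [hx1] at this
      linarith
    have hx1' : (1:ℤ) ≤ x := by exact_mod_cast hx1
    have hdle : (d:ℤ) ≤ K - 1 := by nlinarith [h1, h4]
    have hxle : (x:ℤ) ≤ 2*K - 2 := by linarith [h3, hdle]
    nlinarith [h2, h4, hx1', mul_nonneg (sub_nonneg.mpr hx1') (by linarith : (0:ℤ) ≤ 2*K - 2 - x)]


end Density

end ForestCover

/-- The minimum number of forests needed to cover all edges of `G`. -/
noncomputable def forestCoverNumber [Fintype V] (G : SimpleGraph V) : ℕ :=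
  sInf {t : ℕ | ∃ F : Fin t → Set (Sym2 V),
    (∀ i, F i ⊆ G.edgeSet ∧ (SimpleGraph.fromEdgeSet (F i)).IsAcyclic) ∧
    (⋃ i, F i) = G.edgeSet}

/-- If `G` is connected and every proper subset `X` of `V(G)` is a `(1/2)`-set (some vertex
outside `X` has at least `|X|/2` neighbours in `X`), then the minimum number of forests needed
to cover the edges of `G` equals `⌈|E(G)|/(|V(G)|−1)⌉`. -/
theorem forestCoverNumber_of_half_sets [Fintype V] (G : SimpleGraph V) (hconn : G.Connected)
    (hhalf : ∀ X : Set V, X ≠ Set.univ →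
      ∃ u ∉ X, X.ncard ≤ 2 * {x ∈ X | G.Adj u x}.ncard) :
    forestCoverNumber G = ⌈(G.edgeSet.ncard : ℚ) / ((Fintype.card V : ℚ) - 1)⌉₊ := by
  classical
  haveI : Nonempty V := hconn.nonempty
  have hmcard : G.edgeSet.ncard = (ForestCover.edgeFin G).card := by
    rw [ForestCover.edgeFin, ← Set.ncard_coe_finset, Set.Finite.coe_toFinset]
  set K := ⌈(G.edgeSet.ncard : ℚ) / ((Fintype.card V : ℚ) - 1)⌉₊ with hK
  have hKform : K = ⌈((ForestCover.edgeFin G).card : ℚ) / ((Fintype.card V : ℚ) - 1)⌉₊ := by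
    rw [hK, hmcard]
  have hNice : ForestCover.Nice (ForestCover.edgeFin G) := fun e he =>
    G.not_isDiag_of_mem_edgeSet (ForestCover.mem_edgeFin.mp he)
  have hdens := ForestCover.density (G := G) hhalf
  rw [← hKform] at hdens
  obtain ⟨𝓕, hcov⟩ := ForestCover.exists_forest_cover_fam (ForestCover.edgeFin G) hNice K hdens
  have hKmem : K ∈ {t : ℕ | ∃ F : Fin t → Set (Sym2 V),
      (∀ i, F i ⊆ G.edgeSet ∧ (SimpleGraph.fromEdgeSet (F i)).IsAcyclic) ∧
      (⋃ i, F i) = G.edgeSet} := by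
    refine ⟨fun i => ↑(𝓕.F i), fun i => ⟨?_, ?_⟩, ?_⟩
    · intro e he
      exact ForestCover.mem_edgeFin.mp (𝓕.sub i (Finset.mem_coe.mp he))
    · exact 𝓕.forest i
    · ext e
      simp only [Set.mem_iUnion, Finset.mem_coe]
      constructor
      · rintro ⟨i, hi⟩
        exact ForestCover.mem_edgeFin.mp (𝓕.sub i hi)
      · intro he
        have hmem : e ∈ 𝓕.cov := by rw [hcov]; exact ForestCover.mem_edgeFin.mpr he
        obtain ⟨i, -, hi⟩ := Finset.mem_biUnion.mp hmem
        exact ⟨i, hi⟩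
  have hle : forestCoverNumber G ≤ K := Nat.sInf_le hKmem
  obtain ⟨F, hF, hunion⟩ := Nat.sInf_mem (⟨K, hKmem⟩ : Set.Nonempty _)
  have hge : K ≤ forestCoverNumber G := by
    set t := forestCoverNumber G with ht
    set n := Fintype.card V with hn
    rcases le_or_gt n 1 with hn1 | hn1
    · have hempty : ForestCover.edgeFin G = ∅ :=
        ForestCover.edgeFin_empty_of_card_le_one (by omega)
      rw [hKform, hempty]
      simp
    · have hcount : (ForestCover.edgeFin G).card ≤ t * (n - 1) := by
        set T : Fin t → Finset (Sym2 V) := fun i => (F i).toFinite.toFinset with hT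
        have hTmem : ∀ i (e : Sym2 V), e ∈ T i ↔ e ∈ F i := by
          intro i e
          rw [hT]
          exact Set.Finite.mem_toFinset _
        have hTcard : ∀ i, (T i).card ≤ n - 1 := by
          intro i
          have hNice_i : ForestCover.Nice (T i) := fun e he =>
            G.not_isDiag_of_mem_edgeSet ((hF i).1 ((hTmem i e).mp he))
          have hfor : ForestCover.IsForestF (T i) := by
            have hco : (T i : Set (Sym2 V)) = F i := by
              rw [hT]; exact Set.Finite.coe_toFinset _
            unfold ForestCover.IsForestF ForestCover.eg
            rw [hco]
            exact (hF i).2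
          have := ForestCover.forest_card_le hNice_i hfor
          omega
        have hcovsub : ForestCover.edgeFin G ⊆ Finset.univ.biUnion T := by
          intro e he
          have hmem : e ∈ G.edgeSet := ForestCover.mem_edgeFin.mp he
          rw [← hunion] at hmem
          obtain ⟨i, hi⟩ := Set.mem_iUnion.mp hmem
          exact Finset.mem_biUnion.mpr ⟨i, Finset.mem_univ _, (hTmem i e).mpr hi⟩
        calc (ForestCover.edgeFin G).card ≤ (Finset.univ.biUnion T).card :=
              Finset.card_le_card hcovsub
          _ ≤ ∑ i, (T i).card := Finset.card_biUnion_le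
          _ ≤ ∑ _i : Fin t, (n-1) := Finset.sum_le_sum (fun i _ => hTcard i)
          _ = t * (n - 1) := by simp [Finset.sum_const, Finset.card_univ]
      rw [hKform, Nat.ceil_le]
      have hpos : (0:ℚ) < (n:ℚ) - 1 := by
        have : (1:ℚ) < (n:ℚ) := by exact_mod_cast hn1
        linarith
      rw [div_le_iff₀ hpos]
      have hcast : ((ForestCover.edgeFin G).card : ℚ) ≤ (t:ℚ) * (((n-1 : ℕ)):ℚ) := by
        exact_mod_cast hcount
      rwa [Nat.cast_sub (by omega), Nat.cast_one] at hcast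
  omega
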